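/- Let K be an algebraically closed field, let V and W be nonzero finite-dimensional K-vector spaces, and let f : V → V and g : W → W be nonzero K-linear endomorphisms. If the Kronecker product f ⊗ g (the induced endomorphism of V ⊗[K] W) is semisimple (equivalently, diagonalizable, as K is algebraically closed), then f and g are both semisimple. -/

import Mathlib

open TensorProduct

section auxiliary
open Polynomial

section aux
variable {K V W : Type*} [Field K] [AddCommGroup V] [Module K V] [AddCommGroup W] [Module K W]

lemma aux_tmul_ne_zero {v : V} {w : W} (hv : v ≠ 0) (hw : w ≠ 0) : v ⊗ₜ[K] w ≠ 0 := by
  obtain ⟨φ, hφ⟩ : ∃ φ : Module.Dual K V, φ v ≠ 0 := by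
    by_contra hc; push_neg at hc
    exact hv ((Module.forall_dual_apply_eq_zero_iff K v).mp hc)
  obtain ⟨ψ, hψ⟩ : ∃ ψ : Module.Dual K W, ψ w ≠ 0 := by
    by_contra hc; push_neg at hc
    exact hw ((Module.forall_dual_apply_eq_zero_iff K w).mp hc)
  intro hvw
  have := congrArg (fun t => TensorProduct.lid K K (TensorProduct.map φ ψ t)) hvw
  simp at this
  exact this.elim hφ hψ

lemma aux_ker_sq {S : Module.End K V} (hS : S.IsSemisimple) {x : V} (hx : S (S x) = 0) :
    S x = 0 := by
  set p := LinearMap.ker (S ∘ₗ S) with hp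
  have hinv : p ∈ S.invtSubmodule := by
    intro y hy
    simp only [Submodule.mem_comap, hp, LinearMap.mem_ker, LinearMap.comp_apply] at hy ⊢
    rw [show S (S (S y)) = S (S (S y)) from rfl, ← LinearMap.comp_apply, ← map_zero S, ← hy]
    rfl
  have hinv' : ∀ y ∈ p, S y ∈ p := hinv
  have hres : S.restrict hinv' = 0 := by
    refine Module.End.eq_zero_of_isNilpotent_isSemisimple ⟨2, ?_⟩ (hS.restrict hinv)
    ext ⟨y, hy⟩
    simpa [pow_succ, LinearMap.restrict_apply, hp] using hy
  have hxp : x ∈ p := by simpa [hp] using hx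
  have := LinearMap.congr_fun hres ⟨x, hxp⟩
  simpa [LinearMap.restrict_apply, Subtype.ext_iff] using this
end aux

section aux2
variable {K V W : Type*} [Field K] [IsAlgClosed K]
  [AddCommGroup V] [Module K V] [AddCommGroup W] [Module K W]
  [FiniteDimensional K V] [FiniteDimensional K W]

lemma aux_left (f : Module.End K V) (g : Module.End K W)
    (h : Module.End.IsSemisimple (TensorProduct.map f g : Module.End K (V ⊗[K] W)))
    {μ : K} (hμ : μ ≠ 0) {w : W} (hw : w ≠ 0) (hgw : g w = μ • w) :
    f.IsSemisimple := by
  refine Module.End.isSemisimple_of_squarefree_aeval_eq_zero ?_ (minpoly.aeval K f)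
  have hint : IsIntegral K f := Algebra.IsIntegral.isIntegral f
  have hmono : (minpoly K f).Monic := minpoly.monic hint
  rw [squarefree_iff_irreducible_sq_not_dvd_of_ne_zero hmono.ne_zero]
  rintro q hq ⟨s, hs⟩
  obtain ⟨l, hl⟩ := IsAlgClosed.exists_root q (Polynomial.degree_pos_of_irreducible hq).ne'
  obtain ⟨c, hc⟩ := dvd_iff_isRoot.mpr hl
  set t : K[X] := c * c * s with ht
  have hfact : minpoly K f = (X - C l) ^ 2 * t := by
    rw [hs, hc]; ring
  have ht0 : t ≠ 0 := by
    intro h0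
    exact hmono.ne_zero (by rw [hfact, h0, mul_zero])
  have hP : aeval f ((X - C l) * t) ≠ 0 := by
    intro h0
    have hdvd := minpoly.dvd K f h0
    rw [hfact] at hdvd
    have hne : (X - C l) * t ≠ 0 := mul_ne_zero (X_sub_C_ne_zero l) ht0
    have := Polynomial.natDegree_le_of_dvd hdvd hne
    rw [natDegree_mul (pow_ne_zero 2 (X_sub_C_ne_zero l)) ht0,
      natDegree_mul (X_sub_C_ne_zero l) ht0, natDegree_pow, natDegree_X_sub_C] at this
    omega
  obtain ⟨x, hx⟩ : ∃ x, aeval f ((X - C l) * t) x ≠ 0 := by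
    by_contra h0; push_neg at h0
    exact hP (LinearMap.ext h0)
  set v : V := aeval f t x with hv
  set u : V := f v - l • v with hu
  have hu0 : u ≠ 0 := by
    have heq : aeval f ((X - C l) * t) x = f v - l • v := by
      simp [hv, map_mul, map_sub, Module.End.mul_apply, Module.algebraMap_end_apply]
    rw [hu, ← heq]; exact hx
  have hfu : f u = l • u := by
    have h2 : aeval f ((X - C l) ^ 2 * t) x = 0 := by
      rw [← hfact]
      exact LinearMap.congr_fun (minpoly.aeval K f) x
    have expand : aeval f ((X - C l) ^ 2 * t) x = f u - l • u := by
      simp only [hu, hv, pow_two, map_mul, map_sub, aeval_X, aeval_C, Module.End.mul_apply,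
        Module.algebraMap_end_apply, LinearMap.sub_apply, LinearMap.smul_apply]
      simp [map_sub, map_smul, smul_sub, smul_smul]
    have : f u - l • u = 0 := by rw [← expand, h2]
    linear_combination (norm := module) this
  set T : Module.End K (V ⊗[K] W) := TensorProduct.map f g with hT
  set S : Module.End K (V ⊗[K] W) := T - algebraMap K _ (l * μ) with hS
  have hSss : S.IsSemisimple := Module.End.isSemisimple_sub_algebraMap_iff.mpr h
  have hfv : f v = u + l • v := by rw [hu]; abel
  have hS1 : S (v ⊗ₜ[K] w) = μ • (u ⊗ₜ[K] w) := by
    simp only [hS, hT, LinearMap.sub_apply, TensorProduct.map_tmul,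
      Module.algebraMap_end_apply, hfv, hgw]
    simp only [TensorProduct.add_tmul, TensorProduct.tmul_smul, ← TensorProduct.smul_tmul',
      smul_smul]
    module
  have hS2 : S (u ⊗ₜ[K] w) = 0 := by
    simp only [hS, hT, LinearMap.sub_apply, TensorProduct.map_tmul,
      Module.algebraMap_end_apply, hfu, hgw]
    simp only [TensorProduct.tmul_smul, ← TensorProduct.smul_tmul', smul_smul]
    module
  have hzz : S (S (v ⊗ₜ[K] w)) = 0 := by rw [hS1, map_smul, hS2, smul_zero]
  have hker := aux_ker_sq hSss hzz
  rw [hS1] at hker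
  exact aux_tmul_ne_zero hu0 hw (by simpa [hμ] using (smul_eq_zero.mp hker))
end aux2

section main
variable {K V W : Type*} [Field K] [IsAlgClosed K]
  [AddCommGroup V] [Module K V] [AddCommGroup W] [Module K W]
  [FiniteDimensional K V] [FiniteDimensional K W]

lemma aux_nonzero_eigen (g : Module.End K W) (hnil : ¬ IsNilpotent g) :
    ∃ μ : K, μ ≠ 0 ∧ ∃ w : W, w ≠ 0 ∧ g w = μ • w := by
  obtain ⟨μ, hμ0, hμroot⟩ : ∃ μ : K, μ ≠ 0 ∧ (minpoly K g).IsRoot μ := by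
    by_contra hc; push_neg at hc
    apply hnil
    have hint : IsIntegral K g := Algebra.IsIntegral.isIntegral g
    have hmono : (minpoly K g).Monic := minpoly.monic hint
    have hsp : (minpoly K g).Splits := IsAlgClosed.splits _
    have hprod := hsp.eq_prod_roots_of_monic hmono
    have hroots : ∀ a ∈ (minpoly K g).roots, (X : K[X]) - C a = X := by
      intro a ha
      by_contra ha0
      have ha0' : a ≠ 0 := fun h0 => ha0 (by simp [h0])
      exact hc a ha0' (Polynomial.isRoot_of_mem_roots ha)
    rw [Multiset.map_congr rfl hroots] at hprod
    refine ⟨(minpoly K g).roots.card, ?_⟩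
    have := minpoly.aeval K g
    rw [hprod] at this
    simpa [Multiset.map_const', Multiset.prod_replicate] using this
  have hev : g.HasEigenvalue μ := Module.End.hasEigenvalue_of_isRoot hμroot
  obtain ⟨w, hw⟩ := hev.exists_hasEigenvector
  exact ⟨μ, hμ0, w, hw.2, hw.apply_eq_smul⟩

theorem isSemisimple_of_tensorProduct_map_isSemisimple'
    (f : Module.End K V) (g : Module.End K W)
    (hf : f ≠ 0) (hg : g ≠ 0)
    (h : Module.End.IsSemisimple (TensorProduct.map f g : Module.End K (V ⊗[K] W))) :
    f.IsSemisimple ∧ g.IsSemisimple := by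
  have hmap0 : (TensorProduct.map f g : Module.End K (V ⊗[K] W)) ≠ 0 := by
    intro h0
    obtain ⟨v, hv⟩ : ∃ v : V, f v ≠ 0 := by
      by_contra hc; push_neg at hc; exact hf (LinearMap.ext hc)
    obtain ⟨w, hw⟩ : ∃ w : W, g w ≠ 0 := by
      by_contra hc; push_neg at hc; exact hg (LinearMap.ext hc)
    have : TensorProduct.map f g (v ⊗ₜ[K] w) = 0 := by rw [h0]; rfl
    rw [TensorProduct.map_tmul] at this
    exact aux_tmul_ne_zero hv hw this
  have hfnil : ¬ IsNilpotent f := by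
    rintro ⟨n, hn⟩
    refine hmap0 (Module.End.eq_zero_of_isNilpotent_isSemisimple ⟨n, ?_⟩ h)
    rw [TensorProduct.map_pow, hn]
    exact TensorProduct.ext (by ext v w; simp)
  have hgnil : ¬ IsNilpotent g := by
    rintro ⟨n, hn⟩
    refine hmap0 (Module.End.eq_zero_of_isNilpotent_isSemisimple ⟨n, ?_⟩ h)
    rw [TensorProduct.map_pow, hn]
    exact TensorProduct.ext (by ext v w; simp)
  obtain ⟨μ, hμ0, w, hw0, hgw⟩ := aux_nonzero_eigen g hgnil
  obtain ⟨ν, hν0, v, hv0, hfv⟩ := aux_nonzero_eigen f hfnil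
  refine ⟨aux_left f g h hμ0 hw0 hgw, ?_⟩
  have hcomm : (TensorProduct.comm K V W).toLinearMap ∘ₗ (TensorProduct.map f g)
      = (TensorProduct.map g f) ∘ₗ (TensorProduct.comm K V W).toLinearMap := by
    exact TensorProduct.ext rfl
  have h' : Module.End.IsSemisimple (TensorProduct.map g f : Module.End K (W ⊗[K] V)) :=
    (LinearEquiv.isSemisimple_iff _ _ (TensorProduct.comm K V W) hcomm).mp h
  exact aux_left g f h' hν0 hv0 hfv
end main

end auxiliary

/-- If the Kronecker product `f ⊗ g` of two nonzero endomorphisms of nonzero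
finite-dimensional vector spaces over an algebraically closed field is semisimple,
then both `f` and `g` are semisimple. -/
theorem isSemisimple_of_tensorProduct_map_isSemisimple
    {K : Type*} [Field K] [IsAlgClosed K]
    {V W : Type*} [AddCommGroup V] [Module K V] [AddCommGroup W] [Module K W]
    [FiniteDimensional K V] [FiniteDimensional K W]
    [Nontrivial V] [Nontrivial W]
    (f : Module.End K V) (g : Module.End K W)
    (hf : f ≠ 0) (hg : g ≠ 0)
    (h : Module.End.IsSemisimple (TensorProduct.map f g : Module.End K (V ⊗[K] W))) :
    f.IsSemisimple ∧ g.IsSemisimple :=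
  isSemisimple_of_tensorProduct_map_isSemisimple' f g hf hg h
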